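/- Let H be a finite-dimensional complex inner product space with anticommuting square-zero differentials ∂, ∂̄ and their adjoints ∂*, ∂̄*. Define Δ_A = ∂∂* + ∂̄∂̄* + (∂∂̄)*(∂∂̄) + (∂∂̄)(∂∂̄)* + (∂̄∂*)*(∂̄∂*) + (∂̄∂*)(∂̄∂*)*. Then x ∈ ker Δ_A if and only if ∂*x = 0, ∂̄*x = 0, and ∂∂̄ x = 0. -/

import Mathlib

/-- The Aeppli Laplacian
`Δ_A = ∂∂* + ∂̄∂̄* + (∂∂̄)*(∂∂̄) + (∂∂̄)(∂∂̄)* + (∂̄∂*)*(∂̄∂*) + (∂̄∂*)(∂̄∂*)*`,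
with `p = ∂`, `q = ∂̄`, `ps = ∂*`, `qs = ∂̄*`. -/
def deltaA {H : Type*} [AddCommGroup H] [Module ℂ H]
    (p q ps qs : H →ₗ[ℂ] H) : H →ₗ[ℂ] H :=
  p ∘ₗ ps + q ∘ₗ qs + (qs ∘ₗ ps) ∘ₗ (p ∘ₗ q) + (p ∘ₗ q) ∘ₗ (qs ∘ₗ ps)
    + (p ∘ₗ qs) ∘ₗ (q ∘ₗ ps) + (q ∘ₗ ps) ∘ₗ (p ∘ₗ qs)

/-- `x ∈ ker Δ_A` iff `∂* x = 0`, `∂̄* x = 0` and `∂∂̄ x = 0`. -/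
theorem stmt9 {H : Type*} [NormedAddCommGroup H] [InnerProductSpace ℂ H]
    [FiniteDimensional ℂ H]
    (p q ps qs : H →ₗ[ℂ] H)
    (hp : p ∘ₗ p = 0) (hq : q ∘ₗ q = 0) (hpq : p ∘ₗ q + q ∘ₗ p = 0)
    (hps : ∀ x y : H, (inner ℂ (p x) y : ℂ) = inner ℂ x (ps y))
    (hqs : ∀ x y : H, (inner ℂ (q x) y : ℂ) = inner ℂ x (qs y)) :
    ∀ x : H, deltaA p q ps qs x = 0 ↔ (ps x = 0 ∧ qs x = 0 ∧ p (q x) = 0) := by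
  have hps' : ∀ x y : H, (inner ℂ (ps x) y : ℂ) = inner ℂ x (p y) := by
    intro x y
    rw [← inner_conj_symm (ps x) y, ← hps y x, inner_conj_symm]
  have hqs' : ∀ x y : H, (inner ℂ (qs x) y : ℂ) = inner ℂ x (q y) := by
    intro x y
    rw [← inner_conj_symm (qs x) y, ← hqs y x, inner_conj_symm]
  intro x
  constructor
  · intro h
    have key : (inner ℂ (deltaA p q ps qs x) x : ℂ)
        = (‖ps x‖ : ℂ) ^ 2 + (‖qs x‖ : ℂ) ^ 2 + (‖p (q x)‖ : ℂ) ^ 2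
          + (‖qs (ps x)‖ : ℂ) ^ 2 + (‖q (ps x)‖ : ℂ) ^ 2 + (‖p (qs x)‖ : ℂ) ^ 2 := by
      simp only [deltaA, LinearMap.add_apply, LinearMap.comp_apply, inner_add_left]
      rw [hps (ps x) x, hqs (qs x) x, hqs' (ps (p (q x))) x, hps' (p (q x)) (q x),
        hps (q (qs (ps x))) x, hqs (qs (ps x)) (ps x),
        hps (qs (q (ps x))) x, hqs' (q (ps x)) (ps x),
        hqs (ps (p (qs x))) x, hps' (p (qs x)) (qs x)]
      simp [inner_self_eq_norm_sq_to_K]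
    rw [h, inner_zero_left] at key
    have hr : (0:ℝ) = ‖ps x‖ ^ 2 + ‖qs x‖ ^ 2 + ‖p (q x)‖ ^ 2
        + ‖qs (ps x)‖ ^ 2 + ‖q (ps x)‖ ^ 2 + ‖p (qs x)‖ ^ 2 := by
      exact_mod_cast key
    have h1 : ‖ps x‖ = 0 := by nlinarith [sq_nonneg (‖ps x‖), sq_nonneg (‖qs x‖), sq_nonneg (‖p (q x)‖), sq_nonneg (‖qs (ps x)‖), sq_nonneg (‖q (ps x)‖), sq_nonneg (‖p (qs x)‖), norm_nonneg (ps x)]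
    have h2 : ‖qs x‖ = 0 := by nlinarith [sq_nonneg (‖ps x‖), sq_nonneg (‖qs x‖), sq_nonneg (‖p (q x)‖), sq_nonneg (‖qs (ps x)‖), sq_nonneg (‖q (ps x)‖), sq_nonneg (‖p (qs x)‖), norm_nonneg (qs x)]
    have h3 : ‖p (q x)‖ = 0 := by nlinarith [sq_nonneg (‖ps x‖), sq_nonneg (‖qs x‖), sq_nonneg (‖p (q x)‖), sq_nonneg (‖qs (ps x)‖), sq_nonneg (‖q (ps x)‖), sq_nonneg (‖p (qs x)‖), norm_nonneg (p (q x))]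
    exact ⟨norm_eq_zero.mp h1, norm_eq_zero.mp h2, norm_eq_zero.mp h3⟩
  · rintro ⟨h1, h2, h3⟩
    simp [deltaA, LinearMap.add_apply, LinearMap.comp_apply, h1, h2, h3]
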